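/- Q-resolution is sound: if C₁ and C₂ are non-tautological clauses of a closed PCNF Q̂.φ, p is an existential variable with p ∈ C₁ and ¬p ∈ C₂, and the tentative Q-resolvent C' = (UR(C₁)\{p}) ∪ (UR(C₂)\{¬p}) is non-tautological, then Q̂.φ is satisfiable if and only if Q̂.(φ ∧ C') is satisfiable. -/

import Mathlib

/-- Variables are natural numbers. -/
abbrev Var := Nat

/-- A literal: a variable with a polarity (`pos = true` means positive). -/
structure Lit where
  var : Var
  pos : Bool
deriving DecidableEq, Repr

abbrev Clause := List Lit
abbrev Cube := List Lit
abbrev CNF := List Clause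

abbrev Assignment := Var → Bool

def Lit.eval (α : Assignment) (l : Lit) : Bool :=
  if l.pos then α l.var else !(α l.var)

def Clause.eval (α : Assignment) (C : Clause) : Bool := C.any (Lit.eval α)

def Cube.evalCube (α : Assignment) (C : Cube) : Bool := C.all (Lit.eval α)

def CNF.eval (α : Assignment) (φ : CNF) : Bool := φ.all (Clause.eval α)

/-- A flat quantifier prefix: list of (quantifier, variable); `true` = ∃, `false` = ∀. -/
abbrev QPrefix := List (Bool × Var)

/-- Recursive semantics of closed prenex QBFs, relative to an ambient assignment `α`. -/
def QSat (α : Assignment) : QPrefix → (Assignment → Bool) → Prop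
  | [], m => m α = true
  | (true, x) :: p, m => ∃ b, QSat (Function.update α x b) p m
  | (false, x) :: p, m => ∀ b, QSat (Function.update α x b) p m

/-- Satisfiability of a closed prenex formula. -/
def Sat (L : QPrefix) (m : Assignment → Bool) : Prop :=
  QSat (fun _ => false) L m

def pvars (L : QPrefix) : List Var := L.map Prod.snd

/-- The quantifier of a variable in the prefix (`true` = ∃). -/
def quantOf (L : QPrefix) (x : Var) : Bool :=
  ((L.find? (fun p => p.2 == x)).map Prod.fst).getD true

/-- Position of a variable in the linear prefix ordering. -/
def varIdx (L : QPrefix) (x : Var) : Nat := (pvars L).idxOf x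

def Clause.vars (C : Clause) : List Var := C.map Lit.var
def CNF.vars (φ : CNF) : List Var := φ.flatMap Clause.vars

/-- A closed PCNF: all matrix variables are quantified, and no variable twice. -/
def Closed (L : QPrefix) (φ : CNF) : Prop :=
  (∀ v ∈ CNF.vars φ, v ∈ pvars L) ∧ (pvars L).Nodup

def existLits (L : QPrefix) (C : List Lit) : List Lit :=
  C.filter (fun l => quantOf L l.var)

def univLits (L : QPrefix) (C : List Lit) : List Lit :=
  C.filter (fun l => !(quantOf L l.var))

/-- Universal reduction of a clause: remove universal literals larger than all
existential literals of the clause. -/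
def univRed (L : QPrefix) (C : Clause) : Clause :=
  C.filter (fun l =>
    !((!(quantOf L l.var)) &&
      (existLits L C).all (fun l' => decide (varIdx L l'.var < varIdx L l.var))))

/-- Existential reduction of a cube: remove existential literals larger than all
universal literals of the cube. -/
def exRed (L : QPrefix) (C : Cube) : Cube :=
  C.filter (fun l =>
    !((quantOf L l.var) &&
      (univLits L C).all (fun l' => decide (varIdx L l'.var < varIdx L l.var))))

def Lit.neg (l : Lit) : Lit := ⟨l.var, !l.pos⟩

/-- Tautological clause / contradictory cube: contains complementary literals. -/
def Tauto (C : List Lit) : Prop := ∃ l ∈ C, Lit.neg l ∈ C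

/-- Tentative Q-qResolvent of two clauses on existential pivot `p`. -/
def qResolvent (L : QPrefix) (C₁ C₂ : Clause) (p : Var) : Clause :=
  (univRed L C₁).filter (fun l => l ≠ ⟨p, true⟩) ++
  (univRed L C₂).filter (fun l => l ≠ ⟨p, false⟩)

/-- Q-resolution derivations from the clauses of `φ`. -/
inductive QDer (L : QPrefix) (φ : CNF) : Clause → Prop
  | ax {C} : C ∈ φ → QDer L φ C
  | ur {C} : QDer L φ C → QDer L φ (univRed L C)
  | res {C₁ C₂} {p : Var} :
      QDer L φ C₁ → QDer L φ C₂ →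
      ¬ Tauto C₁ → ¬ Tauto C₂ →
      quantOf L p = true → (⟨p, true⟩ : Lit) ∈ C₁ → (⟨p, false⟩ : Lit) ∈ C₂ →
      ¬ Tauto (qResolvent L C₁ C₂ p) →
      QDer L φ (qResolvent L C₁ C₂ p)

/-- The initial cube of a (total) model `α`: conjunction of the literals set by `α`,
in prefix order. -/
def initCube (L : QPrefix) (α : Assignment) : Cube :=
  L.map (fun p => ⟨p.2, α p.2⟩)

/-- Tentative cube qResolvent of two cubes on universal pivot `x`. -/
def cubeResolvent (L : QPrefix) (C₁ C₂ : Cube) (x : Var) : Cube :=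
  (exRed L C₁).filter (fun l => l ≠ ⟨x, true⟩) ++
  (exRed L C₂).filter (fun l => l ≠ ⟨x, false⟩)

/-- Cube derivations: model generation rule, existential reduction, cube resolution. -/
inductive CubeDer (L : QPrefix) (φ : CNF) : Cube → Prop
  | init (α : Assignment) : CNF.eval α φ = true → CubeDer L φ (initCube L α)
  | er {C} : CubeDer L φ C → CubeDer L φ (exRed L C)
  | res {C₁ C₂} {x : Var} :
      CubeDer L φ C₁ → CubeDer L φ C₂ →
      ¬ Tauto C₁ → ¬ Tauto C₂ →
      quantOf L x = false → (⟨x, true⟩ : Lit) ∈ C₁ → (⟨x, false⟩ : Lit) ∈ C₂ →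
      ¬ Tauto (cubeResolvent L C₁ C₂ x) →
      CubeDer L φ (cubeResolvent L C₁ C₂ x)

/-- Block-structured prefix: list of (quantifier, block of variables). -/
abbrev BPrefix := List (Bool × List Var)

def flatP (P : BPrefix) : QPrefix := P.flatMap (fun b => b.2.map (fun x => (b.1, x)))

def SatB (P : BPrefix) (m : Assignment → Bool) : Prop := Sat (flatP P) m

/-- Closed PCNF with block prefix. -/
def ClosedB (P : BPrefix) (φ : CNF) : Prop :=
  (∀ v ∈ CNF.vars φ, v ∈ pvars (flatP P)) ∧
  (∀ v ∈ pvars (flatP P), v ∈ CNF.vars φ) ∧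
  (pvars (flatP P)).Nodup




section QResSound

lemma pvars_cons (q : Bool) (x : Var) (L : QPrefix) : pvars ((q,x)::L) = x :: pvars L := rfl

lemma pvars_append (K M : QPrefix) : pvars (K ++ M) = pvars K ++ pvars M := by
  simp [pvars]

lemma qsat_mono {L : QPrefix} {α : Assignment} {m m' : Assignment → Bool}
    (h : QSat α L m)
    (himp : ∀ β, (∀ v, v ∉ pvars L → β v = α v) → m β = true → m' β = true) :
    QSat α L m' := by
  induction L generalizing α with
  | nil => exact himp α (fun _ _ => rfl) h
  | cons qx L ih =>
    obtain ⟨q, x⟩ := qx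
    have hstep : ∀ (b : Bool) (β : Assignment),
        (∀ v, v ∉ pvars L → β v = Function.update α x b v) → m β = true → m' β = true := by
      intro b β hβ hm
      refine himp β ?_ hm
      intro v hv
      simp only [pvars_cons, List.mem_cons, not_or] at hv
      rw [hβ v hv.2, Function.update_of_ne hv.1]
    cases q with
    | true =>
      obtain ⟨b, hb⟩ := h
      exact ⟨b, ih hb (hstep b)⟩
    | false =>
      intro b
      exact ih (h b) (hstep b)

lemma qsat_exists {L : QPrefix} {α : Assignment} {m : Assignment → Bool}
    (h : QSat α L m) :
    ∃ β, (∀ v, v ∉ pvars L → β v = α v) ∧ m β = true := by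
  induction L generalizing α with
  | nil => exact ⟨α, fun _ _ => rfl, h⟩
  | cons qx L ih =>
    obtain ⟨q, x⟩ := qx
    have key : ∀ (b : Bool), QSat (Function.update α x b) L m →
        ∃ β, (∀ v, v ∉ pvars ((q,x)::L) → β v = α v) ∧ m β = true := by
      intro b hb
      obtain ⟨β, hβ, hm⟩ := ih hb
      refine ⟨β, ?_, hm⟩
      intro v hv
      simp only [pvars_cons, List.mem_cons, not_or] at hv
      rw [hβ v hv.2, Function.update_of_ne hv.1]
    cases q with
    | true => obtain ⟨b, hb⟩ := h; exact key b hb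
    | false => exact key true (h true)

lemma quantOf_append (K L' : QPrefix) (q : Bool) (x : Var) (h : x ∉ pvars K) :
    quantOf (K ++ (q, x) :: L') x = q := by
  induction K with
  | nil => simp [quantOf]
  | cons a K ih =>
    have hax : ¬((fun (p : Bool × Var) => p.2 == x) a) = true := by
      simp only [pvars, List.map_cons, List.mem_cons, not_or] at h
      simpa using fun e => h.1 e.symm
    have h' : x ∉ pvars K := by
      simp only [pvars, List.map_cons, List.mem_cons, not_or] at h
      exact h.2
    unfold quantOf
    rw [List.cons_append,
      show List.find? (fun (p : Bool × Var) => p.2 == x) (a :: (K ++ (q, x) :: L')) =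
        List.find? (fun p => p.2 == x) (K ++ (q, x) :: L') from List.find?_cons_of_neg hax]
    simpa [quantOf] using ih h'

lemma exists_max_nat {α : Type} (f : α → ℕ) :
    ∀ (l : List α), l ≠ [] → ∃ a ∈ l, ∀ b ∈ l, f b ≤ f a := by
  intro l
  induction l with
  | nil => simp
  | cons x l ih =>
    intro _
    rcases eq_or_ne l [] with rfl | hl
    · exact ⟨x, by simp, by simp⟩
    · obtain ⟨a, ha, hmaxa⟩ := ih hl
      rcases le_total (f a) (f x) with hle | hle
      · refine ⟨x, by simp, ?_⟩
        intro b hb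
        rcases List.mem_cons.mp hb with rfl | hb
        · exact le_rfl
        · exact (hmaxa b hb).trans hle
      · refine ⟨a, List.mem_cons_of_mem _ ha, ?_⟩
        intro b hb
        rcases List.mem_cons.mp hb with rfl | hb
        · exact hle
        · exact hmaxa b hb

lemma length_filter_lt' {α : Type} (p : α → Bool) (l : List α) (a : α)
    (ha : a ∈ l) (hpa : p a = false) :
    (l.filter p).length < l.length := by
  induction l with
  | nil => simp at ha
  | cons x l ih =>
    rcases List.mem_cons.mp ha with rfl | ha
    · rw [List.filter_cons, hpa]
      exact Nat.lt_succ_of_le (List.length_filter_le _ _)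
    · by_cases hx : p x = true
      · simp only [List.filter_cons, hx, if_pos rfl, List.length_cons]
        exact Nat.succ_lt_succ (ih ha)
      · rw [List.filter_cons]
        simp only [hx, if_neg]
        exact Nat.lt_succ_of_lt (ih ha)

lemma lit_eq_neg {l u : Lit} (hv : l.var = u.var) (hne : l ≠ u) : l = Lit.neg u := by
  obtain ⟨v, p⟩ := l
  obtain ⟨w, q⟩ := u
  simp only [Lit.var] at hv
  subst hv
  unfold Lit.neg
  cases p <;> cases q <;> simp_all

lemma ur1 (L₀ : QPrefix) (hnd : (pvars L₀).Nodup) (E : Clause) (u : Lit)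
    (hu : u ∈ E) (hq : quantOf L₀ u.var = false)
    (hvars : ∀ l ∈ E, l.var ∈ pvars L₀)
    (hmax : ∀ l ∈ E, l ≠ u → varIdx L₀ l.var < varIdx L₀ u.var)
    (φ : CNF) (hE : E ∈ φ) :
    ∀ (L K : QPrefix), L₀ = K ++ L → u.var ∈ pvars L →
    ∀ α, QSat α L (fun β => CNF.eval β φ) →
      QSat α L (fun β => CNF.eval β ((E.filter (fun l => l ≠ u)) :: φ)) := by
  intro L
  induction L with
  | nil =>
    intro K _ hmem
    simp [pvars] at hmem
  | cons qx L' ih =>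
    obtain ⟨q, x⟩ := qx
    intro K hsplit hmem α h
    by_cases hx : x = u.var
    · subst hx
      have hndsplit : (pvars K ++ u.var :: pvars L').Nodup := by
        have h' := hnd
        rw [hsplit, pvars_append, pvars_cons] at h'
        exact h'
      obtain ⟨hndK, hndR, hdisj⟩ := List.nodup_append'.mp hndsplit
      have hxK : u.var ∉ pvars K := fun hxk => hdisj hxk List.mem_cons_self
      have hqq : q = false := by
        have h2 := quantOf_append K L' q u.var hxK
        rw [← hsplit] at h2
        rw [h2] at hq
        exact hq
      subst hqq
      have hidxu : varIdx L₀ u.var = (pvars K).length := by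
        rw [hsplit]
        unfold varIdx
        rw [pvars_append, pvars_cons, List.idxOf_append_of_notMem hxK]
        simp
      have hKfacts : ∀ l ∈ E, l ≠ u → l.var ≠ u.var ∧ l.var ∉ pvars L' := by
        intro l hl hlu
        have hlt := hmax l hl hlu
        rw [hidxu] at hlt
        have hlK : l.var ∈ pvars K := by
          by_contra hnot
          have heq : varIdx L₀ l.var = (pvars K).length + (u.var :: pvars L').idxOf l.var := by
            rw [hsplit]
            unfold varIdx
            rw [pvars_append, pvars_cons, List.idxOf_append_of_notMem hnot]
          omega
        have hnotr : l.var ∉ u.var :: pvars L' := fun hr => hdisj hlK hr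
        simp only [List.mem_cons, not_or] at hnotr
        exact hnotr
      have hxL' : u.var ∉ pvars L' := (List.nodup_cons.mp hndR).1
      intro b
      by_cases hsat : ∃ l ∈ E.filter (fun l => l ≠ u), Lit.eval α l = true
      · obtain ⟨l, hlE', hleval⟩ := hsat
        have hl := List.mem_filter.mp hlE'
        have hlu : l ≠ u := by simpa using hl.2
        obtain ⟨hne, hnL⟩ := hKfacts l hl.1 hlu
        refine qsat_mono (h b) ?_
        intro β hβ hm
        have hβl : β l.var = α l.var := by
          rw [hβ l.var hnL, Function.update_of_ne hne]
        have hclause : Clause.eval β (E.filter (fun l => l ≠ u)) = true := by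
          unfold Clause.eval
          rw [List.any_eq_true]
          refine ⟨l, hlE', ?_⟩
          unfold Lit.eval at hleval ⊢
          rw [hβl]
          exact hleval
        simp only [CNF.eval, List.all_cons, Bool.and_eq_true]
        exact ⟨hclause, hm⟩
      · exfalso
        push_neg at hsat
        obtain ⟨β, hβ, hm⟩ := qsat_exists (h (!u.pos))
        have hEtrue : Clause.eval β E = true := by
          have := (List.all_eq_true.mp hm) E hE
          exact this
        obtain ⟨l, hlE, hleval⟩ := List.any_eq_true.mp hEtrue
        have huvar : β u.var = !u.pos := by
          rw [hβ u.var hxL', Function.update_self]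
        by_cases hlu : l = u
        · subst hlu
          unfold Lit.eval at hleval
          rw [huvar] at hleval
          cases hp : l.pos <;> rw [hp] at hleval <;> simp at hleval
        · obtain ⟨hne, hnL⟩ := hKfacts l hlE hlu
          have hβl : β l.var = α l.var := by
            rw [hβ l.var hnL, Function.update_of_ne hne]
          have hlev' : Lit.eval α l = true := by
            unfold Lit.eval at hleval ⊢
            rw [← hβl]
            exact hleval
          have hmemf : l ∈ E.filter (fun l => l ≠ u) :=
            List.mem_filter.mpr ⟨hlE, by simpa using hlu⟩
          have := hsat l hmemf
          simp [hlev'] at this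
    · have hmem' : u.var ∈ pvars L' := by
        simp only [pvars_cons, List.mem_cons] at hmem
        rcases hmem with h' | h'
        · exact absurd h'.symm hx
        · exact h'
      have hsplit' : L₀ = (K ++ [(q, x)]) ++ L' := by rw [hsplit]; simp
      cases q with
      | true =>
        obtain ⟨b, hb⟩ := h
        exact ⟨b, ih (K ++ [(true, x)]) hsplit' hmem' _ hb⟩
      | false =>
        intro b
        exact ih (K ++ [(false, x)]) hsplit' hmem' _ (h b)

lemma ur_full (L₀ : QPrefix) (hnd : (pvars L₀).Nodup) :
    ∀ (n : ℕ) (E : Clause), E.length ≤ n → ¬ Tauto E →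
      (∀ l ∈ E, l.var ∈ pvars L₀) →
    ∀ (φ : CNF), E ∈ φ → ∀ α, QSat α L₀ (fun β => CNF.eval β φ) →
      QSat α L₀ (fun β => CNF.eval β (univRed L₀ E :: φ)) := by
  intro n
  induction n with
  | zero =>
    intro E hlen _ _ φ hE α h
    have hE0 : E = [] := List.length_eq_zero_iff.mp (Nat.le_zero.mp hlen)
    subst hE0
    refine qsat_mono h ?_
    intro β _ hm
    have hfalse : Clause.eval β [] = true := (List.all_eq_true.mp hm) [] hE
    simp [Clause.eval] at hfalse
  | succ n ih =>
    intro E hlen htaut hvars φ hE α h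
    set keep : Lit → Bool := fun l =>
      !((!(quantOf L₀ l.var)) &&
        (existLits L₀ E).all (fun l' => decide (varIdx L₀ l'.var < varIdx L₀ l.var))) with hkeep
    have hUR : univRed L₀ E = E.filter keep := rfl
    by_cases hall : ∀ l ∈ E, keep l = true
    · rw [hUR, List.filter_eq_self.mpr hall]
      refine qsat_mono h ?_
      intro β _ hm
      simp only [CNF.eval, List.all_cons, Bool.and_eq_true]
      exact ⟨(List.all_eq_true.mp hm) E hE, hm⟩
    · push_neg at hall
      obtain ⟨l₀, hl₀E, hl₀⟩ := hall
      have hl₀f : keep l₀ = false := by simpa using hl₀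
      have hmm : l₀ ∈ E.filter (fun l => !keep l) :=
        List.mem_filter.mpr ⟨hl₀E, by simp [hl₀f]⟩
      obtain ⟨u, huRm, humax⟩ := exists_max_nat (fun l => varIdx L₀ l.var) _ (List.ne_nil_of_mem hmm)
      have huE : u ∈ E := (List.mem_filter.mp huRm).1
      have hukeep : keep u = false := by
        have h' := (List.mem_filter.mp huRm).2
        simpa using h'
      have hq' : quantOf L₀ u.var = false ∧
          ∀ l' ∈ existLits L₀ E, varIdx L₀ l'.var < varIdx L₀ u.var := by
        rw [hkeep] at hukeep
        simp only [Bool.not_eq_false', Bool.and_eq_true, Bool.not_eq_true',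
          List.all_eq_true, decide_eq_true_eq] at hukeep
        exact ⟨hukeep.1, fun l' hl' => hukeep.2 l' hl'⟩
      have hmaxE : ∀ l ∈ E, l ≠ u → varIdx L₀ l.var < varIdx L₀ u.var := by
        intro l hl hlu
        by_cases hquant : quantOf L₀ l.var = true
        · exact hq'.2 l (List.mem_filter.mpr ⟨hl, hquant⟩)
        · have hqf : quantOf L₀ l.var = false := by
            revert hquant; cases (quantOf L₀ l.var) <;> simp
          by_cases hkl : keep l = true
          · rw [hkeep] at hkl
            simp only [hqf, Bool.not_false, Bool.true_and, Bool.not_eq_true',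
              List.all_eq_false, decide_eq_true_eq, not_lt] at hkl
            obtain ⟨l', hl', hle⟩ := hkl
            exact lt_of_le_of_lt hle (hq'.2 l' hl')
          · have hklf : keep l = false := by simpa using hkl
            have hlRm : l ∈ E.filter (fun l => !keep l) :=
              List.mem_filter.mpr ⟨hl, by simp [hklf]⟩
            have hle := humax l hlRm
            rcases lt_or_eq_of_le hle with hlt | heq
            · exact hlt
            · exfalso
              have hvu : l.var = u.var := by
                have h1 : l.var ∈ pvars L₀ := hvars l hl
                have h2 : u.var ∈ pvars L₀ := hvars u huE
                exact (List.idxOf_inj h1).mp heq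
              have hlneg : l = Lit.neg u := lit_eq_neg hvu hlu
              exact htaut ⟨u, huE, hlneg ▸ hl⟩
      have step := ur1 L₀ hnd E u huE hq'.1 hvars hmaxE φ hE L₀ [] rfl (hvars u huE) α h
      have hlen' : (E.filter (fun l => l ≠ u)).length ≤ n := by
        have hlt : (E.filter (fun l => l ≠ u)).length < E.length :=
          length_filter_lt' _ E u huE (by simp)
        omega
      have htaut' : ¬ Tauto (E.filter (fun l => l ≠ u)) := by
        rintro ⟨l, hl, hnl⟩
        exact htaut ⟨l, (List.mem_filter.mp hl).1, (List.mem_filter.mp hnl).1⟩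
      have hvars' : ∀ l ∈ E.filter (fun l => l ≠ u), l.var ∈ pvars L₀ :=
        fun l hl => hvars l (List.mem_filter.mp hl).1
      have step2 := ih (E.filter (fun l => l ≠ u)) hlen' htaut' hvars'
        (E.filter (fun l => l ≠ u) :: φ) List.mem_cons_self α step
      have hexist : existLits L₀ (E.filter (fun l => l ≠ u)) = existLits L₀ E := by
        unfold existLits
        rw [List.filter_filter]
        apply List.filter_congr
        intro l hl
        by_cases hlu : l = u
        · subst hlu
          simp [hq'.1]
        · simp [hlu]
      have hUReq : univRed L₀ (E.filter (fun l => l ≠ u)) = univRed L₀ E := by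
        unfold univRed
        rw [hexist, List.filter_filter]
        apply List.filter_congr
        intro l hl
        by_cases hlu : l = u
        · subst hlu
          have : keep l = false := hukeep
          rw [hkeep] at this
          simp only [Bool.not_eq_false'] at this
          simp [this]
        · simp [hlu]
      refine qsat_mono step2 ?_
      intro β _ hm
      simp only [CNF.eval, List.all_cons, Bool.and_eq_true] at hm ⊢
      refine ⟨?_, hm.2.2⟩
      rw [← hUReq]
      exact hm.1

end QResSound

/-- Q-resolution is sound. -/
theorem qresolution_sound (L : QPrefix) (φ : CNF) (C₁ C₂ : Clause) (p : Var)
    (hclosed : Closed L φ)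
    (h1 : C₁ ∈ φ) (h2 : C₂ ∈ φ)
    (ht1 : ¬ Tauto C₁) (ht2 : ¬ Tauto C₂)
    (hp : quantOf L p = true)
    (hp1 : (⟨p, true⟩ : Lit) ∈ C₁) (hp2 : (⟨p, false⟩ : Lit) ∈ C₂)
    (ht : ¬ Tauto (qResolvent L C₁ C₂ p)) :
    Sat L (fun α => CNF.eval α φ) ↔ Sat L (fun α => CNF.eval α (qResolvent L C₁ C₂ p :: φ)) := by
  have hnd := hclosed.2
  have hv : ∀ (C : Clause), C ∈ φ → ∀ l ∈ C, l.var ∈ pvars L := by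
    intro C hC l hl
    apply hclosed.1
    unfold CNF.vars Clause.vars
    exact List.mem_flatMap.mpr ⟨C, hC, List.mem_map_of_mem hl⟩
  constructor
  · intro h
    have s1 := ur_full L hnd C₁.length C₁ le_rfl ht1 (hv C₁ h1) φ h1 _ h
    have s2 := ur_full L hnd C₂.length C₂ le_rfl ht2 (hv C₂ h2) (univRed L C₁ :: φ)
        (List.mem_cons_of_mem _ h2) _ s1
    refine qsat_mono s2 ?_
    intro β _ hm
    simp only [CNF.eval, List.all_cons, Bool.and_eq_true] at hm ⊢
    obtain ⟨h2', h1', hφ⟩ := hm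
    refine ⟨?_, hφ⟩
    unfold qResolvent Clause.eval
    rw [List.any_append, Bool.or_eq_true]
    by_cases hβp : β p = true
    · right
      obtain ⟨l, hl, hle⟩ := List.any_eq_true.mp h2'
      have hlne : l ≠ (⟨p, false⟩ : Lit) := by
        rintro rfl
        simp [Lit.eval, hβp] at hle
      exact List.any_eq_true.mpr ⟨l, List.mem_filter.mpr ⟨hl, by simpa using hlne⟩, hle⟩
    · left
      obtain ⟨l, hl, hle⟩ := List.any_eq_true.mp h1'
      have hlne : l ≠ (⟨p, true⟩ : Lit) := by
        rintro rfl
        simp [Lit.eval] at hle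
        exact hβp hle
      exact List.any_eq_true.mpr ⟨l, List.mem_filter.mpr ⟨hl, by simpa using hlne⟩, hle⟩
  · intro h
    refine qsat_mono h ?_
    intro β _ hm
    simp only [CNF.eval, List.all_cons, Bool.and_eq_true] at hm
    exact hm.2
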